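/- arXiv:1809.00803 — 3 statements merged into one kernel-verified Lean document; each statement's English description precedes it below -/
import Mathlib

section
/- Let $\{A_n\}$ and $\{B_n\}$ be sequences of real random variables on a common probability space such that: (1) $\mathbf{E}A_n = \mathbf{E}[A_n B_n] = 0$ for each $n$; (2) there is $c>0$ with $\mathbf{E}[A_n^2] \ge c$ for each $n$; (3) there are constants $C>0$ and $p>2$ with $\mathbf{E}|A_n|^p \le C$ and $\mathbf{E}[B_n^2] \le C$ for each $n$. Then $A_n + B_n$ does not converge in probability to $0$. -/
open MeasureTheory Filter
open scoped ENNReal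

private lemma memLp_of_int {Ω : Type*} [MeasurableSpace Ω] {μ : Measure Ω} {f : Ω → ℝ}
    (hf : Measurable f) {r : ℝ} (hr : 0 < r)
    (h : Integrable (fun x => |f x| ^ r) μ) : MemLp f (ENNReal.ofReal r) μ := by
  have h0 : ENNReal.ofReal r ≠ 0 := by simp [ENNReal.ofReal_eq_zero, not_le, hr]
  have ht : ENNReal.ofReal r ≠ ⊤ := ENNReal.ofReal_ne_top
  refine (memLp_norm_rpow_iff (q := ENNReal.ofReal r) (p := ENNReal.ofReal r)
      hf.aestronglyMeasurable h0 ht).1 ?_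
  rw [ENNReal.div_self h0 ht, memLp_one_iff_integrable]
  simpa [ENNReal.toReal_ofReal hr.le, Real.norm_eq_abs] using h

/-- If `A n` has mean zero, is uncorrelated with `B n`, has second moment
bounded below and `p`-th moment (`p > 2`) bounded above, and `B n` has bounded second moment,
then `A n + B n` does not converge to `0` in probability. -/
theorem no_convergence_in_probability
    {Ω : Type*} [MeasurableSpace Ω] (μ : Measure Ω) [IsProbabilityMeasure μ]
    (A B : ℕ → Ω → ℝ)
    (c C p : ℝ) (hc : 0 < c) (hC : 0 < C) (hp : 2 < p)
    (hAmeas : ∀ n, Measurable (A n)) (hBmeas : ∀ n, Measurable (B n))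
    (hAint : ∀ n, Integrable (A n) μ)
    (hABint : ∀ n, Integrable (fun ω => A n ω * B n ω) μ)
    (hApint : ∀ n, Integrable (fun ω => |A n ω| ^ p) μ)
    (hB2int : ∀ n, Integrable (fun ω => (B n ω) ^ 2) μ)
    (hAmean : ∀ n, ∫ ω, A n ω ∂μ = 0)
    (hAB : ∀ n, ∫ ω, A n ω * B n ω ∂μ = 0)
    (hA2 : ∀ n, c ≤ ∫ ω, (A n ω) ^ 2 ∂μ)
    (hAp : ∀ n, ∫ ω, |A n ω| ^ p ∂μ ≤ C)
    (hB2 : ∀ n, ∫ ω, (B n ω) ^ 2 ∂μ ≤ C) :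
    ¬ (∀ η : ℝ, 0 < η →
        Tendsto (fun n => μ {ω | η ≤ |A n ω + B n ω|}) atTop (nhds 0)) := by
  intro h
  have hp0 : (0:ℝ) < p := by linarith
  have hp2 : (0:ℝ) < p - 2 := by linarith
  have hK : (0:ℝ) < C ^ (1/p : ℝ) := Real.rpow_pos_of_pos hC _
  set η : ℝ := c / (4 * C ^ (1/p : ℝ)) with hηdef
  have hηpos : 0 < η := by positivity
  set E : ℕ → Set Ω := fun n => {ω | η ≤ |A n ω + B n ω|} with hEdef
  have hEmeas : ∀ n, MeasurableSet (E n) := fun n =>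
    measurableSet_le measurable_const ((hAmeas n).add (hBmeas n)).abs
  set δ : ℕ → ℝ := fun n => (μ (E n)).toReal with hδdef
  have hδ0 : ∀ n, 0 ≤ δ n := fun n => ENNReal.toReal_nonneg
  set T : ℕ → ℝ := fun n => C ^ (2/p : ℝ) * δ n ^ ((p-2)/p : ℝ) with hTdef
  have hT0 : ∀ n, 0 ≤ T n := fun n => by
    rw [hTdef]
    positivity
  -- basic MemLp / integrability facts
  have hMa : ∀ n, MemLp (A n) (ENNReal.ofReal p) μ :=
    fun n => memLp_of_int (hAmeas n) hp0 (hApint n)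
  have habs2 : ∀ x : ℝ, |x| ^ (2:ℝ) = x ^ 2 := fun x => by
    rw [show (2:ℝ) = ((2:ℕ):ℝ) by norm_cast, Real.rpow_natCast]; exact sq_abs x
  have hMb : ∀ n, MemLp (B n) (ENNReal.ofReal 2) μ := fun n =>
    memLp_of_int (hBmeas n) two_pos (by simpa [habs2] using hB2int n)
  have hof2 : ENNReal.ofReal (2:ℝ) = (2:ℝ≥0∞) := by norm_num
  have h2p : (ENNReal.ofReal 2) ≤ ENNReal.ofReal p := ENNReal.ofReal_le_ofReal hp.le
  have hMa2 : ∀ n, MemLp (A n) 2 μ :=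
    fun n => hof2 ▸ (hMa n).mono_exponent h2p
  have hIa2 : ∀ n, Integrable (fun ω => A n ω ^ 2) μ := fun n => (hMa2 n).integrable_sq
  -- the key inequality, valid for each `n`
  have key : ∀ n, c ≤ c/4 + (T n + T n ^ (1/2:ℝ) * C ^ (1/2:ℝ)) := by
    intro n
    have hIab : Integrable (fun ω => A n ω * B n ω) μ := hABint n
    have hIs : Integrable (fun ω => A n ω * (A n ω + B n ω)) μ := by
      refine ((hIa2 n).add hIab).congr (ae_of_all _ fun ω => ?_)
      simp only [Pi.add_apply]
      ring
    have hval : ∫ ω, A n ω * (A n ω + B n ω) ∂μ = ∫ ω, A n ω ^ 2 ∂μ := by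
      have h1 : ∫ ω, A n ω * (A n ω + B n ω) ∂μ
          = ∫ ω, (A n ω ^ 2 + A n ω * B n ω) ∂μ :=
        integral_congr_ae (ae_of_all _ fun ω => by ring)
      rw [h1, integral_add (hIa2 n) hIab, hAB n, add_zero]
    have hsplit : ∫ ω in E n, A n ω * (A n ω + B n ω) ∂μ
        + ∫ ω in (E n)ᶜ, A n ω * (A n ω + B n ω) ∂μ
        = ∫ ω, A n ω * (A n ω + B n ω) ∂μ := integral_add_compl (hEmeas n) hIs
    -- the complement piece is at most `c/4`
    have hIηa : Integrable (fun ω => η * |A n ω|) μ := (hAint n).abs.const_mul η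
    have hholder1 : ∫ ω, |A n ω| ∂μ ≤ C ^ (1/p : ℝ) := by
      have hpq : p.HolderConjugate (p/(p-1)) :=
          (Real.holderConjugate_iff_eq_conjExponent (by linarith)).2 rfl
      have H := integral_mul_le_Lp_mul_Lq_of_nonneg (μ := μ) hpq
        (f := fun ω => |A n ω|) (g := fun _ => (1:ℝ))
        (ae_of_all _ fun ω => abs_nonneg _) (ae_of_all _ fun _ => zero_le_one)
        (hMa n).abs (memLp_const 1)
      simp only [mul_one, Real.one_rpow, integral_const, measure_univ, probReal_univ, ENNReal.toReal_one,
        one_smul] at H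
      refine H.trans ?_
      exact Real.rpow_le_rpow (integral_nonneg fun ω => by positivity) (hAp n)
        (by positivity)
    have hcomp : ∫ ω in (E n)ᶜ, A n ω * (A n ω + B n ω) ∂μ ≤ c/4 := by
      have step1 : ∫ ω in (E n)ᶜ, A n ω * (A n ω + B n ω) ∂μ
          ≤ ∫ ω in (E n)ᶜ, η * |A n ω| ∂μ := by
        refine setIntegral_mono_on hIs.integrableOn hIηa.integrableOn (hEmeas n).compl ?_
        intro ω hω
        have hlt : |A n ω + B n ω| < η := by
          have : ¬ η ≤ |A n ω + B n ω| := by simpa [hEdef] using hω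
          linarith [not_le.1 this]
        calc A n ω * (A n ω + B n ω) ≤ |A n ω * (A n ω + B n ω)| := le_abs_self _
          _ = |A n ω| * |A n ω + B n ω| := abs_mul _ _
          _ ≤ |A n ω| * η := mul_le_mul_of_nonneg_left hlt.le (abs_nonneg _)
          _ = η * |A n ω| := mul_comm _ _
      have step2 : ∫ ω in (E n)ᶜ, η * |A n ω| ∂μ ≤ ∫ ω, η * |A n ω| ∂μ :=
        setIntegral_le_integral hIηa (ae_of_all _ fun ω => by positivity)
      have step3 : ∫ ω, η * |A n ω| ∂μ = η * ∫ ω, |A n ω| ∂μ := integral_const_mul _ _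
      have step4 : η * ∫ ω, |A n ω| ∂μ ≤ η * C ^ (1/p : ℝ) :=
        mul_le_mul_of_nonneg_left hholder1 hηpos.le
      have step5 : η * C ^ (1/p : ℝ) = c/4 := by
        rw [hηdef]; field_simp
      linarith [step1, step2, step3 ▸ step2, step4]
    -- the `E n` piece
    have hEsplit : ∫ ω in E n, A n ω * (A n ω + B n ω) ∂μ
        = ∫ ω in E n, A n ω ^ 2 ∂μ + ∫ ω in E n, A n ω * B n ω ∂μ := by
      rw [← integral_add (hIa2 n).integrableOn hIab.integrableOn]
      exact integral_congr_ae (ae_of_all _ fun ω => by ring)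
    set S : ℝ := ∫ ω in E n, A n ω ^ 2 ∂μ with hSdef
    have hS0 : 0 ≤ S := setIntegral_nonneg (hEmeas n) fun ω _ => sq_nonneg _
    -- Hölder: `S ≤ T n`
    have hST : S ≤ T n := by
      have hrq : (p/2).HolderConjugate (p/(p-2)) :=
          (Real.holderConjugate_iff_eq_conjExponent (by linarith)).2 (by field_simp)
      have hMf : MemLp (fun ω => A n ω ^ 2) (ENNReal.ofReal (p/2)) μ := by
        have h1 := (hMa n).norm_rpow_div 2
        have he : ENNReal.ofReal p / 2 = ENNReal.ofReal (p/2) := by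
          rw [ENNReal.ofReal_div_of_pos (by norm_num), ENNReal.ofReal_ofNat]
        have heq : (fun x => ‖A n x‖ ^ (2:ℝ≥0∞).toReal) = fun x => A n x ^ 2 := by
          funext x
          rw [ENNReal.toReal_ofNat, Real.norm_eq_abs, habs2]
        rw [he, heq] at h1
        exact h1
      have hMg : MemLp ((E n).indicator fun _ => (1:ℝ)) (ENNReal.ofReal (p/(p-2))) μ :=
        (memLp_const 1).indicator (hEmeas n)
      have H := integral_mul_le_Lp_mul_Lq_of_nonneg (μ := μ) hrq
        (ae_of_all _ fun ω => sq_nonneg _)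
        (ae_of_all _ (Set.indicator_nonneg fun _ _ => zero_le_one))
        hMf hMg
      have hL : ∫ ω, A n ω ^ 2 * (E n).indicator (fun _ => (1:ℝ)) ω ∂μ = S := by
        rw [hSdef, ← integral_indicator (hEmeas n)]
        refine integral_congr_ae (ae_of_all _ fun ω => ?_)
        by_cases hω : ω ∈ E n <;> simp [hω]
      have hR1 : ∫ ω, (A n ω ^ 2) ^ (p/2 : ℝ) ∂μ = ∫ ω, |A n ω| ^ p ∂μ := by
        refine integral_congr_ae (ae_of_all _ fun ω => ?_)
        show (A n ω ^ 2 : ℝ) ^ (p/2 : ℝ) = |A n ω| ^ p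
        rw [← sq_abs, ← Real.rpow_natCast |A n ω| 2, ← Real.rpow_mul (abs_nonneg _)]
        congr 1
        push_cast
        ring
      have hq2ne : (p/(p-2) : ℝ) ≠ 0 := (div_pos hp0 hp2).ne'
      have hR2 : ∫ ω, ((E n).indicator (fun _ => (1:ℝ)) ω) ^ (p/(p-2) : ℝ) ∂μ = δ n := by
        have hδn : δ n = (μ (E n)).toReal := by rw [hδdef]
        rw [hδn, ← measureReal_def, ← integral_indicator_one (hEmeas n)]
        refine integral_congr_ae (ae_of_all _ fun ω => ?_)
        by_cases hω : ω ∈ E n <;>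
          simp [hω, Real.zero_rpow hq2ne, Real.one_rpow]
      rw [hL, hR1, hR2, one_div_div, one_div_div] at H
      calc S ≤ (∫ ω, |A n ω| ^ p ∂μ) ^ (2/p : ℝ) * δ n ^ ((p-2)/p : ℝ) := H
        _ ≤ T n := by
            rw [hTdef]
            exact mul_le_mul_of_nonneg_right
              (Real.rpow_le_rpow (integral_nonneg fun ω => by positivity) (hAp n)
                (by positivity))
              (by positivity)
    -- Cauchy–Schwarz: the cross term
    have hABE : ∫ ω in E n, A n ω * B n ω ∂μ ≤ S ^ (1/2:ℝ) * C ^ (1/2:ℝ) := by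
      have hconj2 : (2:ℝ).HolderConjugate 2 :=
          (Real.holderConjugate_iff_eq_conjExponent one_lt_two).2 (by norm_num)
      have hMf3 : MemLp ((E n).indicator fun ω => |A n ω|) (ENNReal.ofReal 2) μ := by
        rw [hof2]
        exact ((hMa2 n).abs).indicator (hEmeas n)
      have hMg3 : MemLp (fun ω => |B n ω|) (ENNReal.ofReal 2) μ := (hMb n).abs
      have H := integral_mul_le_Lp_mul_Lq_of_nonneg (μ := μ) hconj2
        (ae_of_all _ (Set.indicator_nonneg fun ω _ => abs_nonneg _))
        (ae_of_all _ fun ω => abs_nonneg _) hMf3 hMg3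
      have hL : ∫ ω in E n, A n ω * B n ω ∂μ
          ≤ ∫ ω, (E n).indicator (fun ω => |A n ω|) ω * |B n ω| ∂μ := by
        calc ∫ ω in E n, A n ω * B n ω ∂μ ≤ ∫ ω in E n, |A n ω * B n ω| ∂μ :=
              setIntegral_mono_on hIab.integrableOn hIab.abs.integrableOn (hEmeas n)
                fun ω _ => le_abs_self _
          _ = ∫ ω, (E n).indicator (fun ω => |A n ω|) ω * |B n ω| ∂μ := by
              rw [← integral_indicator (hEmeas n)]
              refine integral_congr_ae (ae_of_all _ fun ω => ?_)
              by_cases hω : ω ∈ E n <;> simp [hω, abs_mul]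
      have hR1 : ∫ ω, ((E n).indicator (fun ω => |A n ω|) ω) ^ (2:ℝ) ∂μ = S := by
        rw [hSdef, ← integral_indicator (hEmeas n)]
        refine integral_congr_ae (ae_of_all _ fun ω => ?_)
        by_cases hω : ω ∈ E n <;>
          simp [hω, habs2, Real.zero_rpow (two_ne_zero (α := ℝ))]
      have hR2 : ∫ ω, |B n ω| ^ (2:ℝ) ∂μ ≤ C := by
        have heq : ∫ ω, |B n ω| ^ (2:ℝ) ∂μ = ∫ ω, B n ω ^ 2 ∂μ :=
          integral_congr_ae (ae_of_all _ fun ω => habs2 _)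
        rw [heq]; exact hB2 n
      calc ∫ ω in E n, A n ω * B n ω ∂μ
          ≤ ∫ ω, (E n).indicator (fun ω => |A n ω|) ω * |B n ω| ∂μ := hL
        _ ≤ (∫ ω, ((E n).indicator (fun ω => |A n ω|) ω) ^ (2:ℝ) ∂μ) ^ (1/2:ℝ)
            * (∫ ω, |B n ω| ^ (2:ℝ) ∂μ) ^ (1/2:ℝ) := H
        _ ≤ S ^ (1/2:ℝ) * C ^ (1/2:ℝ) := by
            rw [hR1]
            exact mul_le_mul_of_nonneg_left
              (Real.rpow_le_rpow (integral_nonneg fun ω => by positivity) hR2 (by norm_num))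
              (Real.rpow_nonneg hS0 _)
    have hS12 : S ^ (1/2:ℝ) ≤ T n ^ (1/2:ℝ) := Real.rpow_le_rpow hS0 hST (by norm_num)
    have hcross : S ^ (1/2:ℝ) * C ^ (1/2:ℝ) ≤ T n ^ (1/2:ℝ) * C ^ (1/2:ℝ) :=
      mul_le_mul_of_nonneg_right hS12 (Real.rpow_nonneg hC.le _)
    have hc2 := hA2 n
    rw [← hval, ← hsplit] at hc2
    rw [hEsplit] at hc2
    linarith [hST, hABE, hcross, hcomp]
  -- now let `n → ∞`
  have hδt : Tendsto δ atTop (nhds 0) := by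
    have := (ENNReal.tendsto_toReal (a := 0) (by simp)).comp (h η hηpos)
    simpa [hδdef, hEdef, Function.comp_def] using this
  have haexp : (0:ℝ) < (p-2)/p := by positivity
  have hTt : Tendsto T atTop (nhds 0) := by
    have hca : ContinuousAt (fun x : ℝ => x ^ ((p-2)/p : ℝ)) 0 :=
      Real.continuousAt_rpow_const 0 _ (Or.inr haexp.le)
    have h1 : Tendsto (fun n => δ n ^ ((p-2)/p : ℝ)) atTop (nhds 0) := by
      have := hca.tendsto.comp hδt
      simpa [Real.zero_rpow haexp.ne', Function.comp_def] using this
    have h2 := h1.const_mul (C ^ (2/p : ℝ))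
    rw [mul_zero] at h2
    simpa [hTdef] using h2
  have hT2t : Tendsto (fun n => T n ^ (1/2:ℝ) * C ^ (1/2:ℝ)) atTop (nhds 0) := by
    have hca : ContinuousAt (fun x : ℝ => x ^ (1/2:ℝ)) 0 :=
      Real.continuousAt_rpow_const 0 _ (Or.inr (by norm_num))
    have h1 : Tendsto (fun n => T n ^ (1/2:ℝ)) atTop (nhds 0) := by
      have := hca.tendsto.comp hTt
      simpa [Real.zero_rpow (by norm_num : (1/2:ℝ) ≠ 0), Function.comp_def] using this
    have h2 := h1.mul_const (C ^ (1/2:ℝ))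
    rwa [zero_mul] at h2
  have hsum := hTt.add hT2t
  rw [add_zero] at hsum
  obtain ⟨n, hn⟩ := (hsum.eventually_lt_const (show (0:ℝ) < (3/4)*c by linarith)).exists
  have := key n
  linarith
end

section
/- There is a constant $C$ such that for all $t > 0$ and all $x \in \mathbf{R}^2$, the periodic heat kernel $p_t(x) = \frac{1}{2\pi t}\sum_{z \in \mathbf{Z}^2} e^{-|x+z|^2/(2t)}$ satisfies $p_t(x) \le C(1 + t^{-1}) e^{-|x|_{\mathbf{T}^2}^2/(2t)}$, where $|x|_{\mathbf{T}^2} = \min_{y \in \mathbf{Z}^2} |x + y|$ is the distance on the torus from the origin. -/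
open Real

/-- The plane `ℝ²` with the Euclidean norm. -/
local notation "E2" => EuclideanSpace ℝ (Fin 2)

/-- Embedding of `ℤ²` into `ℝ²`. -/
noncomputable def latticePt (n : Fin 2 → ℤ) : EuclideanSpace ℝ (Fin 2) :=
  WithLp.toLp 2 (fun i => (n i : ℝ))

/-- Distance from the origin on the torus `ℝ²/ℤ²`:
`|x|_{T²} = min_{y ∈ ℤ²} |x + y|`. -/
noncomputable def torusNorm (x : EuclideanSpace ℝ (Fin 2)) : ℝ :=
  ⨅ n : Fin 2 → ℤ, ‖x + latticePt n‖

/-- The periodic heat kernel on the two-dimensional torus: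
`p_t(x) = (2πt)⁻¹ ∑_{z ∈ ℤ²} exp(-|x+z|²/(2t))`. -/
noncomputable def periodicHeatKernel (t : ℝ) (x : EuclideanSpace ℝ (Fin 2)) : ℝ :=
  (1 / (2 * π * t)) * ∑' n : Fin 2 → ℤ, Real.exp (-‖x + latticePt n‖ ^ 2 / (2 * t))

lemma latticePt_add (m n : Fin 2 → ℤ) : latticePt (m + n) = latticePt m + latticePt n := by
  ext i
  simp only [latticePt, PiLp.add_apply, Pi.add_apply, PiLp.toLp_apply]
  push_cast
  ring

lemma norm_sq_eq (x : E2) : ‖x‖ ^ 2 = ∑ i, x i ^ 2 := by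
  rw [EuclideanSpace.norm_eq, Real.sq_sqrt (by positivity)]
  simp [sq_abs]

lemma torusNorm_nonneg (x : E2) : 0 ≤ torusNorm x :=
  le_ciInf fun n => norm_nonneg _

lemma torusNorm_le (x : E2) (n : Fin 2 → ℤ) : torusNorm x ≤ ‖x + latticePt n‖ :=
  ciInf_le ⟨0, fun r ⟨k, hk⟩ => hk ▸ norm_nonneg _⟩ n

lemma torusNorm_sq_le (x : E2) : torusNorm x ^ 2 ≤ 1 / 2 := by
  have h := torusNorm_le x (fun i => -round (x i))
  have h2 : ‖x + latticePt (fun i => -round (x i))‖ ^ 2 ≤ 1 / 2 := by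
    rw [norm_sq_eq]
    have key : ∀ i : Fin 2, ((x + latticePt fun i => -round (x i)) i) ^ 2 ≤ 1 / 4 := by
      intro i
      have hli : (x + latticePt fun i => -round (x i)) i = x i - round (x i) := by
        simp [latticePt, PiLp.add_apply]
        ring
      rw [hli]
      have h3 := abs_sub_round (x i)
      nlinarith [sq_abs (x i - (round (x i) : ℝ)), abs_nonneg (x i - (round (x i) : ℝ))]
    rw [Fin.sum_univ_two]
    linarith [key 0, key 1]
  nlinarith [torusNorm_nonneg x, h]

lemma one_sub_exp_inv {s : ℝ} (hs : 0 < s) : (1 - Real.exp (-s))⁻¹ ≤ 1 + s⁻¹ := by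
  have hexp : Real.exp (-s) ≤ (1 + s)⁻¹ := by
    rw [Real.exp_neg]
    exact inv_anti₀ (by linarith) (by linarith [Real.add_one_le_exp s])
  have h1 : s / (1 + s) ≤ 1 - Real.exp (-s) := by
    have hq : (1 : ℝ) - (1 + s)⁻¹ = s / (1 + s) := by field_simp; ring
    linarith
  have h2 : (0:ℝ) < s / (1 + s) := by positivity
  calc (1 - Real.exp (-s))⁻¹ ≤ (s / (1 + s))⁻¹ := inv_anti₀ h2 h1
    _ = (1 + s) / s := by rw [inv_div]
    _ = 1 + s⁻¹ := by field_simp; ring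

lemma oneDim (c : ℝ) (hc : 0 < c) :
    Summable (fun a : ℤ => Real.exp (-(a : ℝ) ^ 2 * c)) ∧
      ∑' a : ℤ, Real.exp (-(a : ℝ) ^ 2 * c) ≤ 4 * (Real.sqrt c)⁻¹ + 5 := by
  have hsc : 0 < Real.sqrt c := Real.sqrt_pos.mpr hc
  set K : ℕ := ⌈(Real.sqrt c)⁻¹⌉₊ with hKdef
  have hK1 : 0 < K := Nat.ceil_pos.mpr (by positivity)
  have hKle : (K : ℝ) ≤ (Real.sqrt c)⁻¹ + 1 := le_of_lt (Nat.ceil_lt_add_one (by positivity))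
  have hKc : Real.sqrt c ≤ (K : ℝ) * c := by
    have h := Nat.le_ceil ((Real.sqrt c)⁻¹)
    have h2 : (Real.sqrt c)⁻¹ * c = Real.sqrt c := by
      rw [inv_mul_eq_div, Real.div_sqrt]
    nlinarith
  set r : ℝ := Real.exp (-(K : ℝ) * c) with hrdef
  have hr0 : 0 ≤ r := (Real.exp_pos _).le
  have hr1 : r < 1 := by
    apply Real.exp_lt_one_iff.mpr
    have : (0:ℝ) < (K:ℝ) * c := by positivity
    linarith
  set G : ℤ → ℝ := fun a => (if a.natAbs ≤ K then (1 : ℝ) else 0) + r ^ a.natAbs with hGdef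
  have hpt : ∀ a : ℤ, Real.exp (-(a : ℝ) ^ 2 * c) ≤ G a := by
    intro a
    have habs : ((a.natAbs : ℝ)) ^ 2 = (a : ℝ) ^ 2 := by
      rw [Nat.cast_natAbs]
      push_cast
      rw [sq_abs]
    by_cases h : a.natAbs ≤ K
    · have h1 : Real.exp (-(a : ℝ) ^ 2 * c) ≤ 1 := by
        apply Real.exp_le_one_iff.mpr
        nlinarith [sq_nonneg (a : ℝ)]
      have h2 : 0 ≤ r ^ a.natAbs := pow_nonneg hr0 _
      simp only [hGdef, h, if_true]
      linarith
    · simp only [hGdef, h, if_false, zero_add]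
      rw [← Real.exp_nat_mul]
      apply Real.exp_le_exp.mpr
      push_neg at h
      have hn : (K : ℝ) ≤ (a.natAbs : ℝ) := by exact_mod_cast h.le
      have hn0 : (0:ℝ) ≤ (a.natAbs : ℝ) := by positivity
      have key : 0 ≤ (a.natAbs : ℝ) * ((a.natAbs : ℝ) - (K : ℝ)) * c :=
        mul_nonneg (mul_nonneg hn0 (by linarith)) hc.le
      nlinarith [key, habs]
  have hind : Summable (fun a : ℤ => if a.natAbs ≤ K then (1 : ℝ) else 0) := by
    apply summable_of_finite_support
    apply Set.Finite.subset (Set.finite_Icc (-(K : ℤ)) K)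
    intro a ha
    have hcon : a.natAbs ≤ K := by
      by_contra hcon
      simp [Function.mem_support, hcon] at ha
    simp only [Set.mem_Icc]
    omega
  have hgeomN : Summable (fun n : ℕ => r ^ n) := summable_geometric_of_lt_one hr0 hr1
  have hgeom : Summable (fun a : ℤ => r ^ a.natAbs) := by
    apply Summable.of_nat_of_neg
    · simpa using hgeomN
    · simpa using hgeomN
  have hG : Summable G := hind.add hgeom
  have hF : Summable (fun a : ℤ => Real.exp (-(a : ℝ) ^ 2 * c)) :=
    Summable.of_nonneg_of_le (fun a => (Real.exp_pos _).le) hpt hG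
  refine ⟨hF, ?_⟩
  have hindle : ∑' a : ℤ, (if a.natAbs ≤ K then (1 : ℝ) else 0) ≤ 2 * K + 1 := by
    rw [tsum_eq_sum (s := Finset.Icc (-(K : ℤ)) K) (by
      intro a ha
      rw [if_neg]
      intro hcon
      apply ha
      simp only [Finset.mem_Icc]
      omega)]
    calc ∑ a ∈ Finset.Icc (-(K : ℤ)) K, (if a.natAbs ≤ K then (1:ℝ) else 0)
        ≤ ∑ a ∈ Finset.Icc (-(K : ℤ)) K, 1 := by
          apply Finset.sum_le_sum; intro i _; split <;> norm_num
      _ = ((Finset.Icc (-(K : ℤ)) K).card : ℝ) := by simp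
      _ ≤ 2 * K + 1 := by
          rw [Int.card_Icc]
          have hcard : ((K : ℤ) + 1 - -(K : ℤ)).toNat = 2 * K + 1 := by omega
          rw [hcard]
          push_cast
          exact le_refl _
  have harg : ∀ n : ℕ, ((-((n : ℤ) + 1)).natAbs) = n + 1 := fun n => by omega
  have hsucc : Summable (fun n : ℕ => r ^ (n + 1)) := by
    simpa [pow_succ] using hgeomN.mul_right r
  have hgeomle : ∑' a : ℤ, r ^ a.natAbs ≤ 2 * (1 - r)⁻¹ := by
    have hzint : ∑' a : ℤ, r ^ a.natAbs
        = (∑' n : ℕ, r ^ ((n : ℤ)).natAbs) + ∑' n : ℕ, r ^ ((-((n : ℤ) + 1)).natAbs) :=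
      tsum_of_nat_of_neg_add_one (by simpa using hgeomN)
        (by simpa only [harg] using hsucc)
    have e1 : ∑' n : ℕ, r ^ ((n : ℤ)).natAbs = (1 - r)⁻¹ := by
      simpa using tsum_geometric_of_lt_one hr0 hr1
    have e2 : ∑' n : ℕ, r ^ ((-((n : ℤ) + 1)).natAbs) ≤ (1 - r)⁻¹ := by
      simp only [harg]
      calc ∑' n : ℕ, r ^ (n + 1) ≤ ∑' n : ℕ, r ^ n :=
            Summable.tsum_le_tsum (fun n => pow_le_pow_of_le_one hr0 hr1.le (Nat.le_succ n)) hsucc hgeomN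
        _ = (1 - r)⁻¹ := tsum_geometric_of_lt_one hr0 hr1
    rw [hzint, e1]
    linarith
  have hinvle : (1 - r)⁻¹ ≤ 1 + (Real.sqrt c)⁻¹ := by
    have hrle : r ≤ Real.exp (-Real.sqrt c) := Real.exp_le_exp.mpr (by linarith)
    have hpos : 0 < 1 - Real.exp (-Real.sqrt c) := by
      have : Real.exp (-Real.sqrt c) < 1 := Real.exp_lt_one_iff.mpr (by linarith)
      linarith
    calc (1 - r)⁻¹ ≤ (1 - Real.exp (-Real.sqrt c))⁻¹ := inv_anti₀ hpos (by linarith)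
      _ ≤ 1 + (Real.sqrt c)⁻¹ := one_sub_exp_inv hsc
  calc ∑' a : ℤ, Real.exp (-(a : ℝ) ^ 2 * c) ≤ ∑' a : ℤ, G a := Summable.tsum_le_tsum hpt hF hG
    _ = (∑' a : ℤ, (if a.natAbs ≤ K then (1 : ℝ) else 0)) + ∑' a : ℤ, r ^ a.natAbs :=
        Summable.tsum_add hind hgeom
    _ ≤ (2 * K + 1) + 2 * (1 - r)⁻¹ := add_le_add hindle hgeomle
    _ ≤ 4 * (Real.sqrt c)⁻¹ + 5 := by nlinarith [hKle, hinvle]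

lemma twoDim (c : ℝ) (hc : 0 < c) :
    Summable (fun k : Fin 2 → ℤ => Real.exp (-‖latticePt k‖ ^ 2 * c)) ∧
      ∑' k : Fin 2 → ℤ, Real.exp (-‖latticePt k‖ ^ 2 * c) ≤ (4 * (Real.sqrt c)⁻¹ + 5) ^ 2 := by
  obtain ⟨hF, hFle⟩ := oneDim c hc
  set F : ℤ → ℝ := fun a => Real.exp (-(a : ℝ) ^ 2 * c) with hFdef
  have hprod : Summable (fun z : ℤ × ℤ => F z.1 * F z.2) :=
    hF.mul_of_nonneg hF (fun _ => (Real.exp_pos _).le) (fun _ => (Real.exp_pos _).le)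
  have hptw : ∀ k : Fin 2 → ℤ, Real.exp (-‖latticePt k‖ ^ 2 * c) = F (k 0) * F (k 1) := by
    intro k
    have hnk : ‖latticePt k‖ ^ 2 = ((k 0 : ℝ)) ^ 2 + ((k 1 : ℝ)) ^ 2 := by
      rw [norm_sq_eq, Fin.sum_univ_two]
      simp [latticePt]
    simp only [hFdef]
    rw [← Real.exp_add, hnk]
    ring_nf
  have heq : (fun k : Fin 2 → ℤ => Real.exp (-‖latticePt k‖ ^ 2 * c))
      = (fun z : ℤ × ℤ => F z.1 * F z.2) ∘ (piFinTwoEquiv fun _ => ℤ) := by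
    funext k
    simp only [Function.comp_apply, piFinTwoEquiv, Equiv.coe_fn_mk]
    exact hptw k
  have hsum2 : Summable (fun k : Fin 2 → ℤ => Real.exp (-‖latticePt k‖ ^ 2 * c)) := by
    rw [heq]
    exact hprod.comp_injective (Equiv.injective _)
  refine ⟨hsum2, ?_⟩
  have key : ∑' k : Fin 2 → ℤ, Real.exp (-‖latticePt k‖ ^ 2 * c)
      = ∑' z : ℤ × ℤ, F z.1 * F z.2 := by
    rw [← Equiv.tsum_eq (piFinTwoEquiv fun _ => ℤ) (fun z : ℤ × ℤ => F z.1 * F z.2)]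
    refine tsum_congr fun k => ?_
    simp only [piFinTwoEquiv, Equiv.coe_fn_mk]
    exact hptw k
  rw [key, ← Summable.tsum_mul_tsum hF hF hprod]
  have h0 : 0 ≤ ∑' a : ℤ, F a := tsum_nonneg fun a => (Real.exp_pos _).le
  have h5 : (0:ℝ) ≤ 4 * (Real.sqrt c)⁻¹ + 5 := by positivity
  rw [sq]
  exact mul_le_mul hFle hFle h0 h5

lemma piFinset_bound (c : ℝ) :
    Summable (fun k : Fin 2 → ℤ => if ‖latticePt k‖ < 2 then (1:ℝ) else 0) ∧
      ∑' k : Fin 2 → ℤ, (if ‖latticePt k‖ < 2 then (1:ℝ) else 0) ≤ 9 := by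
  set S : Finset (Fin 2 → ℤ) := Fintype.piFinset fun _ => Finset.Icc (-1 : ℤ) 1 with hSdef
  have hsupp : ∀ k : Fin 2 → ℤ, k ∉ S → (if ‖latticePt k‖ < 2 then (1:ℝ) else 0) = 0 := by
    intro k hk
    rw [if_neg]
    intro hcon
    apply hk
    rw [hSdef, Fintype.mem_piFinset]
    intro i
    have hle : ((k i : ℝ)) ^ 2 ≤ ‖latticePt k‖ ^ 2 := by
      rw [norm_sq_eq]
      have := Finset.single_le_sum (f := fun j : Fin 2 => ((latticePt k) j) ^ 2)
        (fun j _ => sq_nonneg _) (Finset.mem_univ i)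
      simpa [latticePt] using this
    have h4 : ((k i : ℝ)) ^ 2 < 4 := by nlinarith [norm_nonneg (latticePt k)]
    have h2 : -2 < (k i : ℝ) ∧ (k i : ℝ) < 2 := by constructor <;> nlinarith
    have h2' : (-2 : ℤ) < k i ∧ k i < 2 := by
      constructor
      · exact_mod_cast h2.1
      · exact_mod_cast h2.2
    simp only [Finset.mem_Icc]
    omega
  have hfin : Summable (fun k : Fin 2 → ℤ => if ‖latticePt k‖ < 2 then (1:ℝ) else 0) := by
    apply summable_of_finite_support
    apply Set.Finite.subset S.finite_toSet
    intro k hk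
    by_contra hcon
    exact hk (hsupp k hcon)
  refine ⟨hfin, ?_⟩
  rw [tsum_eq_sum hsupp]
  calc ∑ k ∈ S, (if ‖latticePt k‖ < 2 then (1:ℝ) else 0) ≤ ∑ k ∈ S, 1 := by
        apply Finset.sum_le_sum; intro i _; split <;> norm_num
    _ = (S.card : ℝ) := by simp
    _ ≤ 9 := by
        have : S.card = 9 := by
          rw [hSdef, Fintype.card_piFinset]
          simp [Int.card_Icc]
        rw [this]; norm_num

set_option maxHeartbeats 1000000 in
/-- There is a constant `C` such that for all `t > 0` and all `x`,
`p_t(x) ≤ C (1 + t⁻¹) exp(-|x|²_{T²}/(2t))`. -/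
theorem periodicHeatKernel_le :
    ∃ C : ℝ, 0 < C ∧ ∀ t : ℝ, 0 < t → ∀ x : EuclideanSpace ℝ (Fin 2),
      periodicHeatKernel t x ≤ C * (1 + t⁻¹) * Real.exp (-(torusNorm x) ^ 2 / (2 * t)) := by
  refine ⟨336, by norm_num, ?_⟩
  intro t ht x
  have hm0 : 0 ≤ torusNorm x := torusNorm_nonneg x
  have hmsq : torusNorm x ^ 2 ≤ 1 / 2 := torusNorm_sq_le x
  obtain ⟨n₀, hn₀⟩ : ∃ n₀ : Fin 2 → ℤ, ‖x + latticePt n₀‖ < 1 := by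
    apply exists_lt_of_ciInf_lt (f := fun n : Fin 2 → ℤ => ‖x + latticePt n‖)
    show torusNorm x < 1
    nlinarith
  set m := torusNorm x with hmdef
  set E := Real.exp (-m ^ 2 / (2 * t)) with hEdef
  have hEpos : 0 < E := Real.exp_pos _
  set c : ℝ := (16 * t)⁻¹ with hcdef
  have hcpos : 0 < c := by positivity
  set g : (Fin 2 → ℤ) → ℝ :=
    fun k => (if ‖latticePt k‖ < 2 then (1:ℝ) else 0) + Real.exp (-‖latticePt k‖ ^ 2 * c)
    with hgdef
  have hshift : ∀ k : Fin 2 → ℤ,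
      x + latticePt (n₀ + k) = (x + latticePt n₀) + latticePt k := by
    intro k
    rw [latticePt_add, ← add_assoc]
  have hmle : ∀ k, m ≤ ‖(x + latticePt n₀) + latticePt k‖ := fun k =>
    (hshift k) ▸ torusNorm_le x (n₀ + k)
  have hpt : ∀ k, Real.exp (-‖(x + latticePt n₀) + latticePt k‖ ^ 2 / (2 * t)) ≤ E * g k := by
    intro k
    set Q := ‖(x + latticePt n₀) + latticePt k‖ with hQdef
    have hQm : m ≤ Q := hmle k
    have hQ0 : 0 ≤ Q := norm_nonneg _
    by_cases hcase : ‖latticePt k‖ < 2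
    · have h1 : Real.exp (-Q ^ 2 / (2 * t)) ≤ E := by
        apply Real.exp_le_exp.mpr
        rw [div_le_div_iff₀ (by positivity) (by positivity)]
        nlinarith [mul_le_mul_of_nonneg_right (neg_le_neg (pow_le_pow_left₀ hm0 hQm 2))
          (by positivity : (0:ℝ) ≤ 2 * t)]
      have h2 : 0 ≤ Real.exp (-‖latticePt k‖ ^ 2 * c) := (Real.exp_pos _).le
      have h3 : g k = 1 + Real.exp (-‖latticePt k‖ ^ 2 * c) := by
        simp [hgdef, hcase]
      rw [h3]
      nlinarith
    · push_neg at hcase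
      set R := ‖latticePt k‖ with hRdef
      have hR0 : (0:ℝ) ≤ R := norm_nonneg _
      have hQR : R - 1 ≤ Q := by
        have htri : ‖latticePt k‖ ≤ ‖(x + latticePt n₀) + latticePt k‖ + ‖x + latticePt n₀‖ := by
          have := norm_sub_le ((x + latticePt n₀) + latticePt k) (x + latticePt n₀)
          simpa using this
        linarith
      have hQsq : m ^ 2 + R ^ 2 / 8 ≤ Q ^ 2 := by
        have hfac : 0 ≤ (R - 2) * (7 * R - 2) :=
          mul_nonneg (by linarith) (by linarith)
        nlinarith [hQR, hQ0]
      have heq2 : E * Real.exp (-R ^ 2 * c) = Real.exp (-(m ^ 2 + R ^ 2 / 8) / (2 * t)) := by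
        rw [hEdef, ← Real.exp_add]
        congr 1
        rw [hcdef]
        field_simp
        ring
      have hgk : g k = Real.exp (-R ^ 2 * c) := by
        show (if ‖latticePt k‖ < 2 then (1:ℝ) else 0) + Real.exp (-‖latticePt k‖ ^ 2 * c) = _
        rw [if_neg (not_lt.mpr hcase), zero_add]
      rw [hgk, heq2]
      apply Real.exp_le_exp.mpr
      rw [div_le_div_iff₀ (by positivity) (by positivity)]
      nlinarith [mul_le_mul_of_nonneg_right hQsq (by positivity : (0:ℝ) ≤ 2 * t)]
  have h2d := twoDim c hcpos
  have hind := piFinset_bound c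
  have hgsum : Summable g := hind.1.add h2d.1
  have hEg : Summable (fun k => E * g k) := hgsum.mul_left E
  have hfsum : Summable
      (fun k : Fin 2 → ℤ => Real.exp (-‖(x + latticePt n₀) + latticePt k‖ ^ 2 / (2 * t))) :=
    Summable.of_nonneg_of_le (fun k => (Real.exp_pos _).le) hpt hEg
  have htsumg : ∑' k : Fin 2 → ℤ, g k ≤ 9 + (4 * (Real.sqrt c)⁻¹ + 5) ^ 2 := by
    rw [hgdef, Summable.tsum_add hind.1 h2d.1]
    exact add_le_add hind.2 h2d.2
  have hT : ∑' k : Fin 2 → ℤ, Real.exp (-‖(x + latticePt n₀) + latticePt k‖ ^ 2 / (2 * t))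
      ≤ E * (9 + (4 * (Real.sqrt c)⁻¹ + 5) ^ 2) := by
    calc ∑' k : Fin 2 → ℤ, Real.exp (-‖(x + latticePt n₀) + latticePt k‖ ^ 2 / (2 * t))
        ≤ ∑' k : Fin 2 → ℤ, E * g k := Summable.tsum_le_tsum hpt hfsum hEg
      _ = E * ∑' k : Fin 2 → ℤ, g k := tsum_mul_left
      _ ≤ E * (9 + (4 * (Real.sqrt c)⁻¹ + 5) ^ 2) :=
          mul_le_mul_of_nonneg_left htsumg hEpos.le
  have hre : ∑' n : Fin 2 → ℤ, Real.exp (-‖x + latticePt n‖ ^ 2 / (2 * t))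
      = ∑' k : Fin 2 → ℤ, Real.exp (-‖(x + latticePt n₀) + latticePt k‖ ^ 2 / (2 * t)) := by
    rw [← Equiv.tsum_eq (Equiv.addLeft n₀)
      (fun n : Fin 2 → ℤ => Real.exp (-‖x + latticePt n‖ ^ 2 / (2 * t)))]
    refine tsum_congr fun k => ?_
    simp only [Equiv.coe_addLeft]
    rw [hshift k]
  set u := Real.sqrt (16 * t) with hudef
  have hu : u ^ 2 = 16 * t := Real.sq_sqrt (by positivity)
  have hu0 : 0 ≤ u := Real.sqrt_nonneg _
  have hscinv : (Real.sqrt c)⁻¹ = u := by rw [hcdef, Real.sqrt_inv, inv_inv]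
  have hule : u ≤ (16 * t + 1) / 2 := by nlinarith [sq_nonneg (u - 1)]
  have hbound : 9 + (4 * (Real.sqrt c)⁻¹ + 5) ^ 2 ≤ 576 * t + 54 := by
    rw [hscinv]
    nlinarith
  have hπ : (3:ℝ) < π := Real.pi_gt_three
  have htt : t * t⁻¹ = 1 := mul_inv_cancel₀ ht.ne'
  have key : (1 / (2 * π * t)) * (576 * t + 54) ≤ 336 * (1 + t⁻¹) := by
    rw [div_mul_eq_mul_div, one_mul, div_le_iff₀ (by positivity)]
    have hexp : 336 * (1 + t⁻¹) * (2 * π * t) = 672 * π * t + 672 * π := by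
      have h : 336 * (1 + t⁻¹) * (2 * π * t) = 672 * π * t + 672 * π * (t * t⁻¹) := by ring
      rw [h, htt]; ring
    rw [hexp]
    nlinarith [mul_pos (by linarith : (0:ℝ) < π - 3) ht]
  unfold periodicHeatKernel
  rw [hre]
  calc (1 / (2 * π * t)) * ∑' k : Fin 2 → ℤ,
        Real.exp (-‖(x + latticePt n₀) + latticePt k‖ ^ 2 / (2 * t))
      ≤ (1 / (2 * π * t)) * (E * (9 + (4 * (Real.sqrt c)⁻¹ + 5) ^ 2)) :=
        mul_le_mul_of_nonneg_left hT (by positivity)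
    _ ≤ (1 / (2 * π * t)) * (E * (576 * t + 54)) :=
        mul_le_mul_of_nonneg_left (mul_le_mul_of_nonneg_left hbound hEpos.le) (by positivity)
    _ = ((1 / (2 * π * t)) * (576 * t + 54)) * E := by ring
    _ ≤ (336 * (1 + t⁻¹)) * E := mul_le_mul_of_nonneg_right key hEpos.le
end

section
/- Suppose $(G_r)_{r\ge 0}$ is a family of differentiable functions $G_r : [0,\theta_1] \to [0,\infty)$ satisfying $|G_r'(\theta)| \le C\,G_{r+1}(\theta)$ for all $r$ and $\theta$, and suppose in addition that there are constants $M > 0$ and $A > 0$ with $G_r(\theta) \le M A^r$ for all $r \ge 0$ and $\theta \in [0,\theta_1]$. Then for all $r \ge 0$ and $\theta \in [0, \theta_1]$, $G_r(\theta) \le \sum_{j=0}^{\infty} \frac{(C\theta)^j}{j!} G_{r+j}(0)$. -/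
open Set

private lemma taylor_key
    (θ₁ C : ℝ) (hθ₁ : 0 ≤ θ₁) (hC : 0 ≤ C)
    (G : ℕ → ℝ → ℝ)
    (hnonneg : ∀ r, ∀ θ ∈ Icc (0 : ℝ) θ₁, 0 ≤ G r θ)
    (hdiff : ∀ r, DifferentiableOn ℝ (G r) (Icc (0 : ℝ) θ₁))
    (hderiv : ∀ r, ∀ θ ∈ Icc (0 : ℝ) θ₁,
      |derivWithin (G r) (Icc (0 : ℝ) θ₁) θ| ≤ C * G (r + 1) θ)
    (M A : ℝ) (hM : 0 < M) (hA : 0 < A)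
    (hbound : ∀ r, ∀ θ ∈ Icc (0 : ℝ) θ₁, G r θ ≤ M * A ^ r) :
    ∀ K r : ℕ, ∀ θ ∈ Icc (0 : ℝ) θ₁,
      G r θ ≤ (∑ j ∈ Finset.range K, (C * θ) ^ j / (j.factorial : ℝ) * G (r + j) 0)
        + M * A ^ (r + K) * ((C * θ) ^ K / (K.factorial : ℝ)) := by
  intro K
  induction K with
  | zero =>
      intro r θ hθ
      simpa using hbound r θ hθ
  | succ K IH =>
      intro r θ hθ
      set F : ℝ → ℝ := fun x =>
        (∑ j ∈ Finset.range (K + 1), (C * x) ^ j / (j.factorial : ℝ) * G (r + j) 0)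
          + M * A ^ (r + (K + 1)) * ((C * x) ^ (K + 1) / ((K + 1).factorial : ℝ))
          - G r x with hF
      have hF0 : F 0 = 0 := by
        have hsum : (∑ j ∈ Finset.range (K + 1),
            (0:ℝ) ^ j / (j.factorial : ℝ) * G (r + j) 0) = G r 0 := by
          rw [Finset.sum_eq_single 0]
          · simp
          · intro j _ hj
            simp [zero_pow hj]
          · simp
        simp only [hF, mul_zero]
        rw [hsum, zero_pow (by omega : K + 1 ≠ 0)]
        ring
      -- derivative of the polynomial part
      have hpoly : ∀ x : ℝ, HasDerivAt (fun y =>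
          (∑ j ∈ Finset.range (K + 1), (C * y) ^ j / (j.factorial : ℝ) * G (r + j) 0)
            + M * A ^ (r + (K + 1)) * ((C * y) ^ (K + 1) / ((K + 1).factorial : ℝ)))
          (C * ((∑ j ∈ Finset.range K, (C * x) ^ j / (j.factorial : ℝ) * G (r + 1 + j) 0)
            + M * A ^ (r + 1 + K) * ((C * x) ^ K / (K.factorial : ℝ)))) x := by
        intro x
        have hid : HasDerivAt (fun y : ℝ => C * y) C x := by
          simpa using (hasDerivAt_id x).const_mul C
        have hterm : ∀ j : ℕ, HasDerivAt
            (fun y => (C * y) ^ j / (j.factorial : ℝ) * G (r + j) 0)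
            ((j : ℝ) * (C * x) ^ (j - 1) * C / (j.factorial : ℝ) * G (r + j) 0) x := by
          intro j
          exact ((hid.pow j).div_const _).mul_const _
        have hsum : HasDerivAt
            (fun y => ∑ j ∈ Finset.range (K + 1),
              (C * y) ^ j / (j.factorial : ℝ) * G (r + j) 0)
            (∑ j ∈ Finset.range (K + 1),
              (j : ℝ) * (C * x) ^ (j - 1) * C / (j.factorial : ℝ) * G (r + j) 0) x :=
          HasDerivAt.fun_sum (fun j _ => hterm j)
        have hrem : HasDerivAt
            (fun y => M * A ^ (r + (K + 1)) * ((C * y) ^ (K + 1) / ((K + 1).factorial : ℝ)))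
            (M * A ^ (r + (K + 1)) *
              (((K + 1 : ℕ) : ℝ) * (C * x) ^ K * C / ((K + 1).factorial : ℝ))) x := by
          have := ((hid.pow (K + 1)).div_const (((K + 1).factorial : ℝ))).const_mul
            (M * A ^ (r + (K + 1)))
          simpa using this
        have htot := hsum.add hrem
        refine htot.congr_deriv ?_
        -- algebraic identity for the derivative
        have hsum_eq : (∑ j ∈ Finset.range (K + 1),
            (j : ℝ) * (C * x) ^ (j - 1) * C / (j.factorial : ℝ) * G (r + j) 0)
            = C * ∑ j ∈ Finset.range K, (C * x) ^ j / (j.factorial : ℝ) * G (r + 1 + j) 0 := by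
          rw [Finset.sum_range_succ', Finset.mul_sum]
          simp only [Nat.cast_zero, zero_mul, zero_div, add_zero]
          refine Finset.sum_congr rfl fun i _ => ?_
          have hfac : ((i + 1).factorial : ℝ) = (i + 1 : ℝ) * (i.factorial : ℝ) := by
            rw [Nat.factorial_succ]; push_cast; ring
          have hne : (i + 1 : ℝ) ≠ 0 := by positivity
          have hfne : (i.factorial : ℝ) ≠ 0 := by
            exact_mod_cast Nat.factorial_ne_zero i
          have : r + (i + 1) = r + 1 + i := by ring
          rw [this, hfac]
          push_cast
          field_simp
        have hrem_eq : M * A ^ (r + (K + 1)) *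
            (((K + 1 : ℕ) : ℝ) * (C * x) ^ K * C / ((K + 1).factorial : ℝ))
            = C * (M * A ^ (r + 1 + K) * ((C * x) ^ K / (K.factorial : ℝ))) := by
          have hfac : ((K + 1).factorial : ℝ) = (K + 1 : ℝ) * (K.factorial : ℝ) := by
            rw [Nat.factorial_succ]; push_cast; ring
          have hne : (K + 1 : ℝ) ≠ 0 := by positivity
          have hfne : (K.factorial : ℝ) ≠ 0 := by
            exact_mod_cast Nat.factorial_ne_zero K
          have hAe : r + (K + 1) = r + 1 + K := by ring
          rw [hAe, hfac]
          push_cast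
          field_simp
        rw [mul_add, ← hsum_eq, ← hrem_eq]
      have hmono : MonotoneOn F (Icc (0 : ℝ) θ₁) := by
        apply monotoneOn_of_deriv_nonneg (convex_Icc 0 θ₁)
        · apply ContinuousOn.sub
          · exact (Differentiable.continuous fun x => (hpoly x).differentiableAt).continuousOn
          · exact (hdiff r).continuousOn
        · intro x hx
          rw [interior_Icc] at hx
          have hmem : Icc (0 : ℝ) θ₁ ∈ nhds x := Icc_mem_nhds hx.1 hx.2
          exact ((hpoly x).differentiableAt.sub
            ((hdiff r x (Ioo_subset_Icc_self hx)).differentiableAt hmem)).differentiableWithinAt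
        · intro x hx
          rw [interior_Icc] at hx
          have hxI : x ∈ Icc (0 : ℝ) θ₁ := Ioo_subset_Icc_self hx
          have hmem : Icc (0 : ℝ) θ₁ ∈ nhds x := Icc_mem_nhds hx.1 hx.2
          have hGd : DifferentiableAt ℝ (G r) x := (hdiff r x hxI).differentiableAt hmem
          have hFd : HasDerivAt F
              (C * ((∑ j ∈ Finset.range K, (C * x) ^ j / (j.factorial : ℝ) * G (r + 1 + j) 0)
                + M * A ^ (r + 1 + K) * ((C * x) ^ K / (K.factorial : ℝ)))
                - deriv (G r) x) x := (hpoly x).sub hGd.hasDerivAt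
          rw [hFd.deriv]
          have hd1 : deriv (G r) x ≤ C * G (r + 1) x := by
            have := hderiv r x hxI
            rw [derivWithin_of_mem_nhds hmem] at this
            exact (le_abs_self _).trans this
          have hd2 : C * G (r + 1) x ≤ C *
              ((∑ j ∈ Finset.range K, (C * x) ^ j / (j.factorial : ℝ) * G (r + 1 + j) 0)
                + M * A ^ (r + 1 + K) * ((C * x) ^ K / (K.factorial : ℝ))) :=
            mul_le_mul_of_nonneg_left (IH (r + 1) x hxI) hC
          linarith
      have := hmono (left_mem_Icc.2 hθ₁) hθ hθ.1
      rw [hF0] at this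
      simp only [hF, sub_nonneg] at this
      linarith [this]

/-- If `(G_r)` are nonnegative differentiable functions on `[0,θ₁]` with
`|G_r'| ≤ C G_{r+1}` and a uniform bound `G_r(θ) ≤ M A^r`, then
`G_r(θ) ≤ ∑_{j=0}^∞ (Cθ)^j/j! · G_{r+j}(0)`. -/
theorem taylor_series_inequality
    (θ₁ C : ℝ) (hθ₁ : 0 ≤ θ₁)
    (G : ℕ → ℝ → ℝ)
    (hnonneg : ∀ r, ∀ θ ∈ Icc (0 : ℝ) θ₁, 0 ≤ G r θ)
    (hdiff : ∀ r, DifferentiableOn ℝ (G r) (Icc (0 : ℝ) θ₁))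
    (hderiv : ∀ r, ∀ θ ∈ Icc (0 : ℝ) θ₁,
      |derivWithin (G r) (Icc (0 : ℝ) θ₁) θ| ≤ C * G (r + 1) θ)
    (M A : ℝ) (hM : 0 < M) (hA : 0 < A)
    (hbound : ∀ r, ∀ θ ∈ Icc (0 : ℝ) θ₁, G r θ ≤ M * A ^ r)
    (r : ℕ) (θ : ℝ) (hθ : θ ∈ Icc (0 : ℝ) θ₁) :
    G r θ ≤ ∑' j : ℕ, (C * θ) ^ j / (j.factorial : ℝ) * G (r + j) 0 := by
  have h0mem : (0 : ℝ) ∈ Icc (0 : ℝ) θ₁ := left_mem_Icc.2 hθ₁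
  rcases le_or_gt 0 C with hC | hC
  · -- main case : C ≥ 0
    have hCθ : 0 ≤ C * θ := mul_nonneg hC hθ.1
    set a : ℕ → ℝ := fun j => (C * θ) ^ j / (j.factorial : ℝ) * G (r + j) 0 with ha
    have ha_nonneg : ∀ j, 0 ≤ a j := fun j => by
      apply mul_nonneg
      · positivity
      · exact hnonneg (r + j) 0 h0mem
    have hle : ∀ j, a j ≤ M * A ^ r * ((A * (C * θ)) ^ j / (j.factorial : ℝ)) := by
      intro j
      have h1 : a j ≤ (C * θ) ^ j / (j.factorial : ℝ) * (M * A ^ (r + j)) := by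
        apply mul_le_mul_of_nonneg_left (hbound (r + j) 0 h0mem)
        positivity
      calc a j ≤ (C * θ) ^ j / (j.factorial : ℝ) * (M * A ^ (r + j)) := h1
        _ = M * A ^ r * ((A * (C * θ)) ^ j / (j.factorial : ℝ)) := by
            rw [pow_add, mul_pow]; ring
    have hsummable : Summable a :=
      Summable.of_nonneg_of_le ha_nonneg hle
        ((Real.summable_pow_div_factorial (A * (C * θ))).mul_left (M * A ^ r))
    have key := taylor_key θ₁ C hθ₁ hC G hnonneg hdiff hderiv M A hM hA hbound
    have h1 : Filter.Tendsto (fun K => ∑ j ∈ Finset.range K, a j) Filter.atTop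
        (nhds (∑' j, a j)) := hsummable.hasSum.tendsto_sum_nat
    have h2 : Filter.Tendsto (fun K : ℕ => M * A ^ (r + K) * ((C * θ) ^ K / (K.factorial : ℝ)))
        Filter.atTop (nhds 0) := by
      have heq : (fun K : ℕ => M * A ^ (r + K) * ((C * θ) ^ K / (K.factorial : ℝ)))
          = fun K : ℕ => M * A ^ r * ((A * (C * θ)) ^ K / (K.factorial : ℝ)) := by
        funext K
        rw [pow_add, mul_pow]; ring
      rw [heq]
      have := (FloorSemiring.tendsto_pow_div_factorial_atTop (K := ℝ) (A * (C * θ))).const_mul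
        (M * A ^ r)
      simpa using this
    have h3 : Filter.Tendsto (fun K : ℕ => (∑ j ∈ Finset.range K, a j)
        + M * A ^ (r + K) * ((C * θ) ^ K / (K.factorial : ℝ))) Filter.atTop
        (nhds (∑' j, a j)) := by
      simpa using h1.add h2
    exact ge_of_tendsto' h3 (fun K => key K r θ hθ)
  · -- degenerate case : C < 0
    have hzero : ∀ s, ∀ x ∈ Icc (0 : ℝ) θ₁, G (s + 1) x = 0 := by
      intro s x hx
      have h := hderiv s x hx
      have h2 := hnonneg (s + 1) x hx
      nlinarith [abs_nonneg (derivWithin (G s) (Icc (0 : ℝ) θ₁) x)]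
    have hdzero : ∀ x ∈ Ico (0 : ℝ) θ₁, derivWithin (G r) (Icc (0 : ℝ) θ₁) x = 0 := by
      intro x hx
      have hxI : x ∈ Icc (0 : ℝ) θ₁ := Ico_subset_Icc_self hx
      have h := hderiv r x hxI
      rw [hzero r x hxI, mul_zero] at h
      exact abs_eq_zero.mp (le_antisymm h (abs_nonneg _))
    have hconst : G r θ = G r 0 := constant_of_derivWithin_zero (hdiff r) hdzero θ hθ
    have htsum : (∑' j : ℕ, (C * θ) ^ j / (j.factorial : ℝ) * G (r + j) 0) = G r 0 := by
      rw [tsum_eq_single 0]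
      · simp
      · intro j hj
        obtain ⟨i, rfl⟩ := Nat.exists_eq_succ_of_ne_zero hj
        have : G (r + (i + 1)) 0 = 0 := by
          have := hzero (r + i) 0 h0mem
          simpa [Nat.add_assoc] using this
        simp [this]
    rw [htsum, hconst]
end
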